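/- Let f : {-1,1}^n → ℝ be a pseudo-Boolean function of Fourier width ρ ≥ 1, and let q > p ≥ 2 be reals. Then ||f||_q ≤ ((2r)! · ρ^{r-1})^{1/(2r)} · ||f||_p, where r = ⌈q/2⌉. -/

import Mathlib

/-- The ±1 value of a Boolean coordinate. -/
noncomputable def sgn (b : Bool) : ℝ := if b then 1 else -1

/-- Expectation of `g` over the uniform distribution on `{-1,1}^n`
(coordinates encoded as `Bool`). -/
noncomputable def pbExp (n : ℕ) (g : (Fin n → Bool) → ℝ) : ℝ :=
  (∑ x : Fin n → Bool, g x) / 2 ^ n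

/-- The character `χ_I(x) = ∏_{i ∈ I} x_i`. -/
noncomputable def chi {n : ℕ} (I : Finset (Fin n)) (x : Fin n → Bool) : ℝ :=
  ∏ i ∈ I, sgn (x i)

/-- The `p`-norm `‖f‖_p = (E[|f(x)|^p])^{1/p}`. -/
noncomputable def pbNorm (n : ℕ) (p : ℝ) (f : (Fin n → Bool) → ℝ) : ℝ :=
  (pbExp n (fun x => |f x| ^ p)) ^ (1 / p)

lemma sgn_sq (b : Bool) : sgn b ^ 2 = 1 := by cases b <;> simp [sgn]

lemma sgn_not (b : Bool) : sgn (!b) = - sgn b := by cases b <;> simp [sgn]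

lemma chi_sq {n : ℕ} (I : Finset (Fin n)) (x : Fin n → Bool) : chi I x ^ 2 = 1 := by
  rw [chi, ← Finset.prod_pow]
  simp [sgn_sq]

lemma chi_empty {n : ℕ} (x : Fin n → Bool) : chi (∅ : Finset (Fin n)) x = 1 := by
  simp [chi]

lemma pbExp_congr {n : ℕ} {g h : (Fin n → Bool) → ℝ} (H : ∀ x, g x = h x) :
    pbExp n g = pbExp n h := by
  unfold pbExp; rw [Finset.sum_congr rfl fun x _ => H x]

lemma pbExp_const (n : ℕ) (c : ℝ) : pbExp n (fun _ => c) = c := by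
  unfold pbExp
  rw [Finset.sum_const, Finset.card_univ, Fintype.card_fun, Fintype.card_fin,
    Fintype.card_bool, nsmul_eq_mul, Nat.cast_pow, Nat.cast_ofNat,
    mul_comm, mul_div_assoc, div_self (by positivity), mul_one]

lemma pbExp_nonneg {n : ℕ} {g : (Fin n → Bool) → ℝ} (h : ∀ x, 0 ≤ g x) :
    0 ≤ pbExp n g :=
  div_nonneg (Finset.sum_nonneg fun x _ => h x) (by positivity)

lemma pbExp_mono {n : ℕ} {g h : (Fin n → Bool) → ℝ} (H : ∀ x, g x ≤ h x) :
    pbExp n g ≤ pbExp n h := by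
  unfold pbExp
  gcongr
  exact H _

lemma pbExp_sum {n : ℕ} {ι : Type*} (T : Finset ι) (g : ι → (Fin n → Bool) → ℝ) :
    pbExp n (fun x => ∑ t ∈ T, g t x) = ∑ t ∈ T, pbExp n (g t) := by
  unfold pbExp
  rw [Finset.sum_comm, Finset.sum_div]

lemma pbExp_smul {n : ℕ} (c : ℝ) (g : (Fin n → Bool) → ℝ) :
    pbExp n (fun x => c * g x) = c * pbExp n g := by
  unfold pbExp
  rw [← Finset.mul_sum, mul_div_assoc]

lemma chi_mul {n : ℕ} (A B : Finset (Fin n)) (x : Fin n → Bool) :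
    chi A x * chi B x = chi (symmDiff A B) x := by
  classical
  have hA : chi A x = chi (A \ B) x * chi (A ∩ B) x := by
    rw [chi, chi, chi, ← Finset.prod_union (Finset.disjoint_sdiff_inter A B)]
    rw [Finset.sdiff_union_inter]
  have hB : chi B x = chi (B \ A) x * chi (B ∩ A) x := by
    rw [chi, chi, chi, ← Finset.prod_union (Finset.disjoint_sdiff_inter B A)]
    rw [Finset.sdiff_union_inter]
  have hBA : chi (B ∩ A) x = chi (A ∩ B) x := by rw [Finset.inter_comm]
  have hsd : chi (symmDiff A B) x = chi (A \ B) x * chi (B \ A) x := by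
    rw [symmDiff_def, Finset.sup_eq_union, chi, chi, chi, ← Finset.prod_union]
    exact disjoint_sdiff_sdiff
  have h2 : chi (A ∩ B) x ^ 2 = 1 := chi_sq _ _
  rw [hA, hB, hBA, hsd]
  calc chi (A \ B) x * chi (A ∩ B) x * (chi (B \ A) x * chi (A ∩ B) x)
      = chi (A \ B) x * chi (B \ A) x * chi (A ∩ B) x ^ 2 := by ring
    _ = chi (A \ B) x * chi (B \ A) x := by rw [h2, mul_one]

lemma pbExp_chi_eq_zero {n : ℕ} {K : Finset (Fin n)} (hK : K ≠ ∅) :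
    pbExp n (chi K) = 0 := by
  classical
  obtain ⟨j, hj⟩ := Finset.nonempty_iff_ne_empty.2 hK
  have hinv : Function.Involutive (fun x : Fin n → Bool => Function.update x j (!x j)) := by
    intro x
    funext i
    by_cases h : i = j
    · subst h; simp
    · simp [Function.update_of_ne h]
  set e := hinv.toPerm with he
  have hsum : ∑ x : Fin n → Bool, chi K x = ∑ x : Fin n → Bool, chi K (e x) :=
    (Equiv.sum_comp e (chi K)).symm
  have hneg : ∀ x : Fin n → Bool, chi K (e x) = - chi K x := by
    intro x
    have h1 : chi K (e x) = sgn (e x j) * ∏ i ∈ K.erase j, sgn (e x i) :=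
      (Finset.mul_prod_erase K _ hj).symm
    have h2 : chi K x = sgn (x j) * ∏ i ∈ K.erase j, sgn (x i) :=
      (Finset.mul_prod_erase K _ hj).symm
    have h3 : ∀ i ∈ K.erase j, sgn (e x i) = sgn (x i) := by
      intro i hi
      have : i ≠ j := Finset.ne_of_mem_erase hi
      show sgn (Function.update x j (!x j) i) = sgn (x i)
      rw [Function.update_of_ne this]
    have h4 : sgn (e x j) = - sgn (x j) := by
      show sgn (Function.update x j (!x j) j) = - sgn (x j)
      rw [Function.update_self, sgn_not]
    rw [h1, h2, Finset.prod_congr rfl h3, h4]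
    ring
  have : ∑ x : Fin n → Bool, chi K x = - ∑ x : Fin n → Bool, chi K x := by
    nth_rewrite 1 [hsum]
    rw [Finset.sum_congr rfl fun x _ => hneg x, Finset.sum_neg_distrib]
  have hz : ∑ x : Fin n → Bool, chi K x = 0 := by linarith
  unfold pbExp
  rw [hz, zero_div]

lemma pbExp_chi {n : ℕ} (K : Finset (Fin n)) :
    pbExp n (chi K) = if K = ∅ then 1 else 0 := by
  by_cases h : K = ∅
  · subst h
    simp only [if_pos rfl]
    rw [pbExp_congr chi_empty, pbExp_const]
    simp
  · rw [if_neg h, pbExp_chi_eq_zero h]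

lemma parseval {n : ℕ} {ι : Type*} [DecidableEq ι] (T : Finset ι) (c : ι → ℝ)
    (m : ι → Finset (Fin n)) (hm : ∀ s ∈ T, ∀ t ∈ T, m s = m t → s = t) :
    pbExp n (fun x => (∑ t ∈ T, c t * chi (m t) x) ^ 2) = ∑ t ∈ T, c t ^ 2 := by
  classical
  have expand : ∀ x : Fin n → Bool,
      (∑ t ∈ T, c t * chi (m t) x) ^ 2
        = ∑ s ∈ T, ∑ t ∈ T, (c s * c t) * chi (symmDiff (m s) (m t)) x := by
    intro x
    rw [sq, Finset.sum_mul_sum]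
    refine Finset.sum_congr rfl fun s _ => Finset.sum_congr rfl fun t _ => ?_
    rw [← chi_mul]
    ring
  rw [pbExp_congr expand]
  rw [pbExp_sum]
  have : ∀ s ∈ T, pbExp n (fun x => ∑ t ∈ T, (c s * c t) * chi (symmDiff (m s) (m t)) x)
      = c s ^ 2 := by
    intro s hs
    rw [pbExp_sum]
    have each : ∀ t ∈ T, pbExp n (fun x => (c s * c t) * chi (symmDiff (m s) (m t)) x)
        = if t = s then c s ^ 2 else 0 := by
      intro t ht
      rw [pbExp_smul, pbExp_chi]
      by_cases hts : t = s
      · subst hts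
        rw [if_pos rfl, if_pos (by simp [symmDiff_self])]
        ring
      · have hne : m s ≠ m t := fun h => hts (hm t ht s hs h.symm)
        rw [if_neg hts, if_neg (by
          intro h
          exact hne (by
            have := symmDiff_eq_bot.mp (by simpa using h)
            exact this))]
        ring
    rw [Finset.sum_congr rfl each, Finset.sum_ite_eq' T s (fun _ => c s ^ 2), if_pos hs]
  rw [Finset.sum_congr rfl this]

open Real in
lemma holder_sum (n : ℕ) (u v : (Fin n → Bool) → ℝ) (hu : ∀ x, 0 ≤ u x) (hv : ∀ x, 0 ≤ v x)
    (m r : ℕ) (hm : 0 < m) (hmr : m < r) (D : ℝ) (hD : 0 < D) :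
    ∑ x : Fin n → Bool, (u x ^ m * v x ^ (r - m)) / D ≤
      ((∑ x : Fin n → Bool, u x ^ r / D) ^ ((m : ℝ) / r)) *
      ((∑ x : Fin n → Bool, v x ^ r / D) ^ (((r : ℝ) - m) / r)) := by
  have hr : 0 < r := lt_trans hm hmr
  have hrm : 0 < r - m := by omega
  set P : ℝ := (r : ℝ) / m with hP
  set Q : ℝ := (r : ℝ) / ((r : ℝ) - m) with hQ
  have hmr' : (m : ℝ) < r := by exact_mod_cast hmr
  have hm' : (0 : ℝ) < m := by exact_mod_cast hm
  have hr' : (0 : ℝ) < r := by exact_mod_cast hr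
  have hne : (r : ℝ) - m ≠ 0 := by linarith
  have hpq : P.HolderConjugate Q := by
    rw [Real.holderConjugate_iff]
    constructor
    · rw [hP, lt_div_iff₀ hm']; linarith
    · rw [hP, hQ]
      field_simp
      ring
  have key := Real.inner_le_Lp_mul_Lq_of_nonneg (Finset.univ)
    (f := fun x : Fin n → Bool => u x ^ m * D ^ (-(m : ℝ) / r))
    (g := fun x : Fin n → Bool => v x ^ (r - m) * D ^ (-((r : ℝ) - m) / r))
    hpq
    (fun x _ => mul_nonneg (pow_nonneg (hu x) m) (rpow_nonneg hD.le _))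
    (fun x _ => mul_nonneg (pow_nonneg (hv x) _) (rpow_nonneg hD.le _))
  have lhs_eq : ∀ x : Fin n → Bool,
      (u x ^ m * D ^ (-(m : ℝ) / r)) * (v x ^ (r - m) * D ^ (-((r : ℝ) - m) / r))
        = (u x ^ m * v x ^ (r - m)) / D := by
    intro x
    have : D ^ (-(m : ℝ) / r) * D ^ (-((r : ℝ) - m) / r) = D⁻¹ := by
      rw [← Real.rpow_add hD]
      have : -(m : ℝ) / r + (-((r : ℝ) - m) / r) = -1 := by field_simp; ring
      rw [this, Real.rpow_neg_one]
    calc (u x ^ m * D ^ (-(m : ℝ) / r)) * (v x ^ (r - m) * D ^ (-((r : ℝ) - m) / r))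
        = (u x ^ m * v x ^ (r - m)) * (D ^ (-(m : ℝ) / r) * D ^ (-((r : ℝ) - m) / r)) := by ring
      _ = (u x ^ m * v x ^ (r - m)) / D := by rw [this, div_eq_mul_inv]
  have f_eq : ∀ x : Fin n → Bool,
      (u x ^ m * D ^ (-(m : ℝ) / r)) ^ P = u x ^ r / D := by
    intro x
    rw [Real.mul_rpow (pow_nonneg (hu x) m) (rpow_nonneg hD.le _)]
    rw [← Real.rpow_natCast (u x) m, ← Real.rpow_natCast (u x) r,
      ← Real.rpow_mul (hu x), ← Real.rpow_mul hD.le]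
    have e1 : (m : ℝ) * P = r := by rw [hP]; field_simp
    have e2 : -(m : ℝ) / r * P = -1 := by rw [hP]; field_simp
    rw [e1, e2, Real.rpow_neg_one, div_eq_mul_inv]
  have g_eq : ∀ x : Fin n → Bool,
      (v x ^ (r - m) * D ^ (-((r : ℝ) - m) / r)) ^ Q = v x ^ r / D := by
    intro x
    rw [Real.mul_rpow (pow_nonneg (hv x) _) (rpow_nonneg hD.le _)]
    rw [← Real.rpow_natCast (v x) (r - m), ← Real.rpow_natCast (v x) r,
      ← Real.rpow_mul (hv x), ← Real.rpow_mul hD.le]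
    have hcast : ((r - m : ℕ) : ℝ) = (r : ℝ) - m := by
      push_cast [Nat.cast_sub hmr.le]
      ring
    have e1 : ((r - m : ℕ) : ℝ) * Q = r := by rw [hcast, hQ]; field_simp
    have e2 : -((r : ℝ) - m) / r * Q = -1 := by
      rw [hQ]
      field_simp
    rw [e1, e2, Real.rpow_neg_one, div_eq_mul_inv]
  have h1P : 1 / P = (m : ℝ) / r := by rw [hP]; field_simp
  have h1Q : 1 / Q = ((r : ℝ) - m) / r := by rw [hQ, one_div_div]
  rw [Finset.sum_congr rfl fun x _ => (lhs_eq x),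
      Finset.sum_congr rfl fun x _ => (f_eq x),
      Finset.sum_congr rfl fun x _ => (g_eq x), h1P, h1Q] at key
  exact key

lemma pbExp_div_form {n : ℕ} (g : (Fin n → Bool) → ℝ) :
    pbExp n g = ∑ x : Fin n → Bool, g x / (2 ^ n : ℝ) := by
  unfold pbExp
  rw [Finset.sum_div]

open Real in
lemma pbExp_pow_holder {n : ℕ} (u v : (Fin n → Bool) → ℝ)
    (hu : ∀ x, 0 ≤ u x) (hv : ∀ x, 0 ≤ v x) (m r : ℕ) (hm : 0 < m) (hmr : m < r) :
    pbExp n (fun x => u x ^ m * v x ^ (r - m)) ≤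
      (pbExp n (fun x => u x ^ r)) ^ ((m : ℝ) / r) *
      (pbExp n (fun x => v x ^ r)) ^ (((r : ℝ) - m) / r) := by
  rw [pbExp_div_form, pbExp_div_form, pbExp_div_form]
  exact holder_sum n u v hu hv m r hm hmr (2 ^ n : ℝ) (by positivity)

open Real in
lemma pbExp_le_rpow {n : ℕ} (φ : (Fin n → Bool) → ℝ) (hφ : ∀ x, 0 ≤ φ x)
    (P : ℝ) (hP : 1 < P) :
    pbExp n φ ≤ (pbExp n (fun x => φ x ^ P)) ^ (1 / P) := by
  set D : ℝ := (2 ^ n : ℝ) with hDdef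
  have hD : 0 < D := by positivity
  set Q : ℝ := P / (P - 1) with hQ
  have hP0 : (0 : ℝ) < P := by linarith
  have hP1 : P - 1 ≠ 0 := by intro h; rw [sub_eq_zero] at h; rw [← h] at hP; linarith
  have hpq : P.HolderConjugate Q := by
    rw [Real.holderConjugate_iff]
    constructor
    · exact hP
    · rw [hQ]; field_simp; ring
  have key := Real.inner_le_Lp_mul_Lq_of_nonneg (Finset.univ)
    (f := fun x : Fin n → Bool => φ x * D ^ (-(1 : ℝ) / P))
    (g := fun _ : Fin n → Bool => D ^ (-(1 : ℝ) / Q))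
    hpq
    (fun x _ => mul_nonneg (hφ x) (rpow_nonneg hD.le _))
    (fun _ _ => rpow_nonneg hD.le _)
  have lhs_eq : ∀ x : Fin n → Bool,
      (φ x * D ^ (-(1 : ℝ) / P)) * D ^ (-(1 : ℝ) / Q) = φ x / D := by
    intro x
    have hsum : -(1 : ℝ) / P + -(1 : ℝ) / Q = -1 := by
      rw [neg_div, neg_div, one_div, one_div, ← neg_add, hpq.inv_add_inv_eq_one]
    rw [mul_assoc, ← Real.rpow_add hD, hsum, Real.rpow_neg_one, div_eq_mul_inv]
  have f_eq : ∀ x : Fin n → Bool,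
      (φ x * D ^ (-(1 : ℝ) / P)) ^ P = φ x ^ P / D := by
    intro x
    rw [Real.mul_rpow (hφ x) (rpow_nonneg hD.le _), ← Real.rpow_mul hD.le]
    have : -(1 : ℝ) / P * P = -1 := by field_simp
    rw [this, Real.rpow_neg_one, div_eq_mul_inv]
  have g_eq : (D ^ (-(1 : ℝ) / Q)) ^ Q = D⁻¹ := by
    rw [← Real.rpow_mul hD.le]
    have : -(1 : ℝ) / Q * Q = -1 := by
      have : Q ≠ 0 := hpq.symm.ne_zero
      field_simp
    rw [this, Real.rpow_neg_one]
  have gsum : ∑ _x : Fin n → Bool, (D ^ (-(1 : ℝ) / Q)) ^ Q = 1 := by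
    rw [Finset.sum_const, Finset.card_univ, Fintype.card_fun, Fintype.card_fin,
      Fintype.card_bool, g_eq, nsmul_eq_mul]
    push_cast
    rw [hDdef]
    field_simp
  rw [Finset.sum_congr rfl fun x _ => lhs_eq x,
      Finset.sum_congr rfl fun x _ => f_eq x, gsum] at key
  rw [Real.one_rpow, mul_one] at key
  rw [pbExp_div_form, pbExp_div_form]
  exact key

open Real in
lemma pbNorm_mono {n : ℕ} (f : (Fin n → Bool) → ℝ) (s t : ℝ) (hs : 0 < s) (hst : s ≤ t) :
    pbNorm n s f ≤ pbNorm n t f := by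
  rcases eq_or_lt_of_le hst with heq | hlt
  · rw [heq]
  have ht : 0 < t := lt_trans hs hlt
  set P : ℝ := t / s with hPdef
  have hP : 1 < P := by rw [hPdef, lt_div_iff₀ hs]; linarith
  have hφ : ∀ x : Fin n → Bool, 0 ≤ |f x| ^ s := fun x => rpow_nonneg (abs_nonneg _) _
  have key := pbExp_le_rpow (fun x => |f x| ^ s) hφ P hP
  have hpow : ∀ x : Fin n → Bool, (|f x| ^ s) ^ P = |f x| ^ t := by
    intro x
    rw [← Real.rpow_mul (abs_nonneg _)]
    congr 1
    rw [hPdef]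
    field_simp
  rw [pbExp_congr hpow] at key
  have hE : 0 ≤ pbExp n (fun x => |f x| ^ t) :=
    pbExp_nonneg fun x => rpow_nonneg (abs_nonneg _) _
  unfold pbNorm
  calc (pbExp n (fun x => |f x| ^ s)) ^ (1 / s)
      ≤ ((pbExp n (fun x => |f x| ^ t)) ^ (1 / P)) ^ (1 / s) := by
        apply Real.rpow_le_rpow (pbExp_nonneg hφ) key (by positivity)
    _ = (pbExp n (fun x => |f x| ^ t)) ^ (1 / t) := by
        rw [← Real.rpow_mul hE]
        congr 1
        rw [hPdef]
        field_simp

lemma chi_split {n : ℕ} {I : Finset (Fin n)} {i : Fin n} (hi : i ∈ I) (x : Fin n → Bool) :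
    chi I x = sgn (x i) * chi (I.erase i) x := by
  rw [chi, chi]
  exact (Finset.mul_prod_erase I (fun j => sgn (x j)) hi).symm

lemma chi_update {n : ℕ} {K : Finset (Fin n)} {i : Fin n} (hi : i ∉ K)
    (x : Fin n → Bool) (c : Bool) : chi K (Function.update x i c) = chi K x := by
  unfold chi
  refine Finset.prod_congr rfl fun j hj => ?_
  have : j ≠ i := fun h => hi (h ▸ hj)
  rw [Function.update_of_ne this]

lemma sum_even_split (N : ℕ) (v : ℕ → ℝ) (hodd : ∀ j, ¬ Even j → v j = 0) :
    ∑ j ∈ Finset.range (2 * N + 1), v j = ∑ m ∈ Finset.range (N + 1), v (2 * m) := by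
  induction N with
  | zero => simp
  | succ N ih =>
    have h1 : 2 * (N + 1) + 1 = (2 * N + 1) + 1 + 1 := by omega
    rw [h1, Finset.sum_range_succ, Finset.sum_range_succ, ih,
      Finset.sum_range_succ (fun m => v (2 * m)) (N + 1)]
    have hodd' : v (2 * N + 1) = 0 := hodd _ (by simp [Nat.even_add_one, parity_simps])
    have h2 : 2 * N + 1 + 1 = 2 * (N + 1) := by omega
    rw [hodd', h2]
    ring

lemma pm_pow (r : ℕ) (a b s : ℝ) (hs : s = 1 ∨ s = -1) :
    (a + s * b) ^ (2 * r) + (a - s * b) ^ (2 * r)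
      = (a + b) ^ (2 * r) + (a - b) ^ (2 * r) := by
  rcases hs with h | h <;> subst h
  · ring_nf
  · have h1 : a + -1 * b = a - b := by ring
    have h2 : a - -1 * b = a + b := by ring
    rw [h1, h2, add_comm]

lemma add_pow_sub_pow (a b : ℝ) (N : ℕ) :
    (a + b) ^ N + (a - b) ^ N
      = ∑ j ∈ Finset.range (N + 1),
          (a ^ j * b ^ (N - j)) * ((N.choose j : ℝ) * (1 + (-1) ^ (N - j))) := by
  have h1 : (a + b) ^ N = ∑ j ∈ Finset.range (N + 1),
      a ^ j * b ^ (N - j) * (N.choose j : ℝ) := add_pow a b N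
  have h2 : (a - b) ^ N = ∑ j ∈ Finset.range (N + 1),
      a ^ j * (-b) ^ (N - j) * (N.choose j : ℝ) := by
    rw [sub_eq_add_neg]
    exact add_pow a (-b) N
  rw [h1, h2, ← Finset.sum_add_distrib]
  refine Finset.sum_congr rfl fun j _ => ?_
  rw [neg_pow]
  ring

open Real in
lemma nat_rpow_le (X Y Z : ℕ) (r k : ℕ) (hr : 0 < r) (h : X ^ r ≤ Y ^ r * Z ^ k) :
    (X : ℝ) ≤ (Y : ℝ) * (Z : ℝ) ^ ((k : ℝ) / r) := by
  have hr' : (0 : ℝ) < r := by exact_mod_cast hr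
  have h' : ((X : ℝ)) ^ (r : ℕ) ≤ ((Y : ℝ)) ^ (r : ℕ) * ((Z : ℝ)) ^ (k : ℕ) := by
    exact_mod_cast h
  have hX : (X : ℝ) = (((X : ℝ)) ^ (r : ℕ)) ^ ((1 : ℝ) / r) := by
    rw [← Real.rpow_natCast (X : ℝ) r, ← Real.rpow_mul (Nat.cast_nonneg X)]
    rw [mul_one_div, div_self hr'.ne', Real.rpow_one]
  rw [hX]
  calc (((X : ℝ)) ^ (r : ℕ)) ^ ((1 : ℝ) / r)
      ≤ (((Y : ℝ)) ^ (r : ℕ) * ((Z : ℝ)) ^ (k : ℕ)) ^ ((1 : ℝ) / r) := by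
        apply Real.rpow_le_rpow (by positivity) h' (by positivity)
    _ = (Y : ℝ) * (Z : ℝ) ^ ((k : ℝ) / r) := by
        rw [Real.mul_rpow (by positivity) (by positivity),
          ← Real.rpow_natCast (Y : ℝ) r, ← Real.rpow_natCast (Z : ℝ) k,
          ← Real.rpow_mul (Nat.cast_nonneg Y), ← Real.rpow_mul (Nat.cast_nonneg Z)]
        rw [mul_one_div, div_self hr'.ne', Real.rpow_one, mul_one_div]

open Finset

lemma fact_sq_ge (r : ℕ) : r ^ r ≤ r.factorial * r.factorial := by
  have h1 : (r.factorial : ℕ) = ∏ i ∈ range r, (i + 1) :=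
    (Finset.prod_range_add_one_eq_factorial r).symm
  have h2 : (r.factorial : ℕ) = ∏ i ∈ range r, (r - i) := by
    rw [h1, ← Finset.prod_range_reflect]
    refine Finset.prod_congr rfl fun i hi => ?_
    have := Finset.mem_range.mp hi
    omega
  calc r ^ r = ∏ _i ∈ range r, r := by rw [Finset.prod_const, Finset.card_range]
    _ ≤ ∏ i ∈ range r, (i + 1) * (r - i) := by
        refine Finset.prod_le_prod' fun i hi => ?_
        have := Finset.mem_range.mp hi
        have h : r - i ≥ 1 := by omega
        nlinarith [Nat.sub_add_cancel (le_of_lt this)]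
    _ = r.factorial * r.factorial := by
        rw [Finset.prod_mul_distrib, ← h1, ← h2]

lemma two_pow_le_centralBinom (r : ℕ) : 2 ^ r ≤ Nat.centralBinom r := by
  induction r with
  | zero => simp [Nat.centralBinom]
  | succ n ih =>
    have key := Nat.succ_mul_centralBinom_succ n
    have h1 : (n + 1) * 2 ^ (n + 1) ≤ (n + 1) * Nat.centralBinom (n + 1) := by
      rw [key]
      calc (n + 1) * 2 ^ (n + 1) = 2 * (n + 1) * 2 ^ n := by ring
        _ ≤ 2 * (2 * n + 1) * Nat.centralBinom n := by
            apply Nat.mul_le_mul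
            · omega
            · exact ih
    exact Nat.le_of_mul_le_mul_left h1 (Nat.succ_pos n)

lemma two_r_pow_le_factorial (r : ℕ) : (2 * r) ^ r ≤ (2 * r).factorial := by
  have h1 : Nat.centralBinom r * r.factorial * r.factorial = (2 * r).factorial := by
    unfold Nat.centralBinom
    have := Nat.choose_mul_factorial_mul_factorial (by omega : r ≤ 2 * r)
    have h2 : 2 * r - r = r := by omega
    rw [h2] at this
    exact this
  calc (2 * r) ^ r = 2 ^ r * r ^ r := by rw [mul_pow]
    _ ≤ Nat.centralBinom r * (r.factorial * r.factorial) :=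
        Nat.mul_le_mul (two_pow_le_centralBinom r) (fact_sq_ge r)
    _ = (2 * r).factorial := by rw [← h1]; ring

lemma ascFactorial_prod (a k : ℕ) : a.ascFactorial k = ∏ i ∈ range k, (a + i) := by
  induction k with
  | zero => simp
  | succ m ih => rw [Nat.ascFactorial_succ, Finset.prod_range_succ, ← ih, mul_comm]

lemma two_r_pow_le_choose_mul (r k : ℕ) (hk : k ≤ r) :
    (2 * r) ^ k ≤ r.choose k * (2 * k).factorial := by
  have hdesc : r.descFactorial k = ∏ i ∈ range k, (r - i) := Nat.descFactorial_eq_prod_range r k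
  have hdesc2 : r.descFactorial k = k.factorial * r.choose k :=
    Nat.descFactorial_eq_factorial_mul_choose r k
  have hasc : k.factorial * (k + 1).ascFactorial k = (2 * k).factorial := by
    have := Nat.factorial_mul_ascFactorial k k
    rw [this]
    congr 1
    omega
  have hascp : (k + 1).ascFactorial k = ∏ i ∈ range k, (k + 1 + i) := ascFactorial_prod _ _
  have key : (2 * r) ^ k ≤ (∏ i ∈ range k, (r - i)) * ∏ i ∈ range k, (k + 1 + i) := by
    rw [← Finset.prod_mul_distrib]
    calc (2 * r) ^ k = ∏ _i ∈ range k, 2 * r := by rw [Finset.prod_const, Finset.card_range]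
      _ ≤ ∏ i ∈ range k, (r - i) * (k + 1 + i) := by
          refine Finset.prod_le_prod' fun i hi => ?_
          have hik : i < k := Finset.mem_range.mp hi
          -- 2r ≤ (r-i)(k+1+i)
          have ht : r - i + i = r := by omega
          set t := r - i with htdef
          have ht1 : 1 ≤ t := by omega
          calc 2 * r = 2 * t + 2 * i := by omega
            _ ≤ 2 * t + 2 * t * i := by nlinarith
            _ = t * (2 + 2 * i) := by ring
            _ ≤ t * (k + 1 + i) := by
                apply Nat.mul_le_mul_left
                omega
  calc (2 * r) ^ k ≤ (∏ i ∈ range k, (r - i)) * ∏ i ∈ range k, (k + 1 + i) := key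
    _ = r.descFactorial k * (k + 1).ascFactorial k := by rw [hdesc, hascp]
    _ = k.factorial * r.choose k * (k + 1).ascFactorial k := by rw [hdesc2]
    _ = r.choose k * (k.factorial * (k + 1).ascFactorial k) := by ring
    _ = r.choose k * (2 * k).factorial := by rw [hasc]

lemma key_nat (r k : ℕ) (hk : k ≤ r) :
    (2 * r).choose (2 * k) ^ r ≤ r.choose k ^ r * (2 * r).factorial ^ k := by
  have h2k : 2 * k ≤ 2 * r := by omega
  have hdesc : (2 * r).choose (2 * k) * (2 * k).factorial = (2 * r).descFactorial (2 * k) := by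
    rw [Nat.descFactorial_eq_factorial_mul_choose]; ring
  have h1 : (2 * r).descFactorial (2 * k) ≤ (2 * r) ^ (2 * k) := Nat.descFactorial_le_pow _ _
  have hfacpos : 0 < (2 * k).factorial ^ r := Nat.pow_pos (Nat.factorial_pos _)
  refine Nat.le_of_mul_le_mul_right ?_ hfacpos
  calc (2 * r).choose (2 * k) ^ r * (2 * k).factorial ^ r
      = ((2 * r).choose (2 * k) * (2 * k).factorial) ^ r := by rw [mul_pow]
    _ = (2 * r).descFactorial (2 * k) ^ r := by rw [hdesc]
    _ ≤ ((2 * r) ^ (2 * k)) ^ r := Nat.pow_le_pow_left h1 r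
    _ = ((2 * r) ^ k) ^ r * ((2 * r) ^ r) ^ k := by
        rw [← pow_mul, ← pow_mul, ← pow_mul, ← pow_add]
        congr 1
        ring
    _ ≤ (r.choose k * (2 * k).factorial) ^ r * ((2 * r).factorial) ^ k := by
        exact Nat.mul_le_mul (Nat.pow_le_pow_left (two_r_pow_le_choose_mul r k hk) r)
          (Nat.pow_le_pow_left (two_r_pow_le_factorial r) k)
    _ = r.choose k ^ r * (2 * r).factorial ^ k * (2 * k).factorial ^ r := by
        rw [mul_pow]; ring

open Real in
lemma moment_bound {n : ℕ} (r ρ : ℕ) (hr : 1 ≤ r) (hρ1 : 1 ≤ ρ)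
    (S : Finset (Fin n)) :
    ∀ (𝓕 : Finset (Finset (Fin n))) (w : Finset (Fin n) → ℝ),
      (∀ I ∈ 𝓕, I ⊆ S) →
      (∀ i : Fin n, (𝓕.filter (fun I => i ∈ I)).card ≤ ρ) →
      pbExp n (fun x => (∑ I ∈ 𝓕, w I * chi I x) ^ (2 * r)) ≤
        (((2 * r).factorial * ρ ^ (r - 1) : ℕ) : ℝ) * (∑ I ∈ 𝓕, w I ^ 2) ^ r := by
  classical
  induction S using Finset.induction_on with
  | empty =>
    intro 𝓕 w hsub _
    have h𝓕 : 𝓕 ⊆ {∅} := by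
      intro I hI
      rw [Finset.mem_singleton]
      exact Finset.subset_empty.mp (hsub I hI)
    have hC1 : (1 : ℝ) ≤ (((2 * r).factorial * ρ ^ (r - 1) : ℕ) : ℝ) := by
      have : 1 ≤ (2 * r).factorial * ρ ^ (r - 1) :=
        Nat.one_le_iff_ne_zero.mpr (Nat.mul_ne_zero (Nat.factorial_ne_zero _)
          (pow_ne_zero _ (by omega)))
      exact_mod_cast this
    rcases Finset.subset_singleton_iff.mp h𝓕 with h | h <;> subst h
    · simp only [Finset.sum_empty]
      rw [pbExp_congr (fun x => by rw [zero_pow (by omega : 2 * r ≠ 0)]), pbExp_const]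
      have : (0 : ℝ) ^ r = 0 := zero_pow (by omega)
      rw [this, mul_zero]
    · have hFx : ∀ x, (∑ I ∈ ({∅} : Finset (Finset (Fin n))), w I * chi I x) = w ∅ := by
        intro x
        rw [Finset.sum_singleton, chi_empty, mul_one]
      rw [pbExp_congr (fun x => by rw [hFx x]), pbExp_const]
      rw [Finset.sum_singleton]
      have h1 : (w ∅) ^ (2 * r) = ((w ∅) ^ 2) ^ r := by rw [← pow_mul]
      rw [h1]
      nlinarith [pow_nonneg (sq_nonneg (w ∅)) r, hC1]
  | @insert i S hiS ih =>
    intro 𝓕 w hsub hwidth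
    set C : ℝ := (((2 * r).factorial * ρ ^ (r - 1) : ℕ) : ℝ) with hCdef
    have hC1 : (1 : ℝ) ≤ C := by
      rw [hCdef]
      have : 1 ≤ (2 * r).factorial * ρ ^ (r - 1) :=
        Nat.one_le_iff_ne_zero.mpr (Nat.mul_ne_zero (Nat.factorial_ne_zero _)
          (pow_ne_zero _ (by omega)))
      exact_mod_cast this
    set 𝓕₀ : Finset (Finset (Fin n)) := 𝓕.filter (fun I => ¬ i ∈ I) with h𝓕₀
    set 𝓕₁ : Finset (Finset (Fin n)) := 𝓕.filter (fun I => i ∈ I) with h𝓕₁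
    set G : (Fin n → Bool) → ℝ := fun x => ∑ I ∈ 𝓕₀, w I * chi I x with hG
    set H : (Fin n → Bool) → ℝ := fun x => ∑ I ∈ 𝓕₁, w I * chi (I.erase i) x with hH
    set a : ℝ := ∑ I ∈ 𝓕₀, w I ^ 2 with ha
    set b : ℝ := ∑ I ∈ 𝓕₁, w I ^ 2 with hb
    have ha0 : 0 ≤ a := Finset.sum_nonneg fun I _ => sq_nonneg _
    have hb0 : 0 ≤ b := Finset.sum_nonneg fun I _ => sq_nonneg _
    -- decomposition
    have hdec : ∀ y, (∑ I ∈ 𝓕, w I * chi I y) = G y + sgn (y i) * H y := by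
      intro y
      rw [← Finset.sum_filter_add_sum_filter_not 𝓕 (fun I => i ∈ I) (fun I => w I * chi I y)]
      rw [add_comm]
      congr 1
      rw [hH, Finset.mul_sum]
      refine Finset.sum_congr rfl fun I hI => ?_
      have hiI : i ∈ I := (Finset.mem_filter.mp hI).2
      rw [chi_split hiI]
      ring
    -- flip involution
    have hinv : Function.Involutive (fun x : Fin n → Bool => Function.update x i (!x i)) := by
      intro x
      funext j
      by_cases h : j = i
      · subst h; simp
      · simp [Function.update_of_ne h]
    set e := hinv.toPerm with he
    have hGe : ∀ x, G (e x) = G x := by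
      intro x
      rw [hG]
      refine Finset.sum_congr rfl fun I hI => ?_
      have hiI : ¬ i ∈ I := (Finset.mem_filter.mp hI).2
      show w I * chi I (Function.update x i (!x i)) = w I * chi I x
      rw [chi_update hiI]
    have hHe : ∀ x, H (e x) = H x := by
      intro x
      rw [hH]
      refine Finset.sum_congr rfl fun I hI => ?_
      show w I * chi (I.erase i) (Function.update x i (!x i)) = w I * chi (I.erase i) x
      rw [chi_update (Finset.notMem_erase i I)]
    have hse : ∀ x : Fin n → Bool, sgn (e x i) = - sgn (x i) := by
      intro x
      show sgn (Function.update x i (!x i) i) = - sgn (x i)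
      rw [Function.update_self, sgn_not]
    set F : (Fin n → Bool) → ℝ := fun x => ∑ I ∈ 𝓕, w I * chi I x with hF
    have hFe : ∀ x, F (e x) = G x - sgn (x i) * H x := by
      intro x
      rw [hF]
      show (∑ I ∈ 𝓕, w I * chi I (e x)) = _
      rw [hdec (e x), hGe, hHe, hse]
      ring
    -- sum pairing
    have hpair : ∀ x, F x ^ (2 * r) + F (e x) ^ (2 * r)
        = (G x + H x) ^ (2 * r) + (G x - H x) ^ (2 * r) := by
      intro x
      rw [hFe x]
      have hdx : F x = G x + sgn (x i) * H x := hdec x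
      rw [hdx]
      exact pm_pow r (G x) (H x) (sgn (x i)) (by cases hxi : x i <;> simp [sgn, hxi])
    have hsum1 : pbExp n (fun x => F x ^ (2 * r))
        = (1 / 2) * (pbExp n (fun x => (G x + H x) ^ (2 * r) + (G x - H x) ^ (2 * r))) := by
      have hcomp : ∑ x : Fin n → Bool, F (e x) ^ (2 * r) = ∑ x : Fin n → Bool, F x ^ (2 * r) :=
        Equiv.sum_comp e (fun x => F x ^ (2 * r))
      unfold pbExp
      rw [← Finset.sum_congr rfl fun x _ => hpair x]
      rw [Finset.sum_add_distrib, hcomp]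
      ring
    -- expand binomially and keep even terms
    have hexp : pbExp n (fun x => F x ^ (2 * r))
        = ∑ m ∈ Finset.range (r + 1), ((2 * r).choose (2 * m) : ℝ) *
            pbExp n (fun x => (G x ^ 2) ^ m * (H x ^ 2) ^ (r - m)) := by
      rw [hsum1]
      have hptw : ∀ x : Fin n → Bool, (G x + H x) ^ (2 * r) + (G x - H x) ^ (2 * r)
          = ∑ j ∈ Finset.range (2 * r + 1),
              (G x ^ j * H x ^ (2 * r - j)) * (((2 * r).choose j : ℝ) * (1 + (-1) ^ (2 * r - j))) :=
        fun x => add_pow_sub_pow (G x) (H x) (2 * r)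
      rw [pbExp_congr hptw, pbExp_sum]
      have hswap : ∀ j, pbExp n (fun x =>
            (G x ^ j * H x ^ (2 * r - j)) * (((2 * r).choose j : ℝ) * (1 + (-1) ^ (2 * r - j))))
          = (((2 * r).choose j : ℝ) * (1 + (-1) ^ (2 * r - j))) *
              pbExp n (fun x => G x ^ j * H x ^ (2 * r - j)) := by
        intro j
        rw [← pbExp_smul]
        exact pbExp_congr fun x => by ring
      rw [Finset.sum_congr rfl fun j _ => hswap j]
      set v : ℕ → ℝ := fun j => (((2 * r).choose j : ℝ) * (1 + (-1) ^ (2 * r - j))) *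
          pbExp n (fun x => G x ^ j * H x ^ (2 * r - j)) with hv
      have hodd : ∀ j, ¬ Even j → v j = 0 := by
        intro j hj
        rcases le_or_gt j (2 * r) with hle | hgt
        · have hoj : Odd j := Nat.not_even_iff_odd.mp hj
          have hodd2 : Odd (2 * r - j) := Nat.Even.sub_odd hle ⟨r, by ring⟩ hoj
          simp only [hv]
          simp only [hodd2.neg_one_pow]
          norm_num
        · simp [hv, Nat.choose_eq_zero_of_lt hgt]
      rw [sum_even_split r v hodd, Finset.mul_sum]
      refine Finset.sum_congr rfl fun m hm => ?_
      have hmr : m ≤ r := by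
        have := Finset.mem_range.mp hm; omega
      simp only [hv]
      have heven : Even (2 * r - 2 * m) := ⟨r - m, by omega⟩
      rw [heven.neg_one_pow]
      have hGp : ∀ x : Fin n → Bool, G x ^ (2 * m) * H x ^ (2 * r - 2 * m)
          = (G x ^ 2) ^ m * (H x ^ 2) ^ (r - m) := by
        intro x
        rw [← pow_mul, ← pow_mul]
        congr 2
        omega
      rw [pbExp_congr hGp]
      ring
    -- Parseval for H
    have hHpar : pbExp n (fun x => H x ^ 2) = b := by
      have hinj : ∀ s ∈ 𝓕₁, ∀ t ∈ 𝓕₁, s.erase i = t.erase i → s = t := by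
        intro s hs t ht hst
        have his : i ∈ s := (Finset.mem_filter.mp hs).2
        have hit : i ∈ t := (Finset.mem_filter.mp ht).2
        rw [← Finset.insert_erase his, ← Finset.insert_erase hit, hst]
      have hp := parseval 𝓕₁ w (fun I => I.erase i) hinj
      calc pbExp n (fun x => H x ^ 2)
          = pbExp n (fun x => (∑ t ∈ 𝓕₁, w t * chi (t.erase i) x) ^ 2) :=
            pbExp_congr fun x => by simp only [hH]
        _ = ∑ t ∈ 𝓕₁, w t ^ 2 := hp
        _ = b := hb.symm
    -- pointwise bound for H
    have hcard1 : (𝓕₁.card : ℝ) ≤ (ρ : ℝ) := by exact_mod_cast hwidth i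
    have hHsq : ∀ x, H x ^ 2 ≤ (ρ : ℝ) * b := by
      intro x
      have hcs : (∑ I ∈ 𝓕₁, w I * chi (I.erase i) x) ^ 2
          ≤ (𝓕₁.card : ℝ) * ∑ I ∈ 𝓕₁, (w I * chi (I.erase i) x) ^ 2 :=
        sq_sum_le_card_mul_sum_sq
      have hsq : ∀ I, (w I * chi (I.erase i) x) ^ 2 = w I ^ 2 := by
        intro I
        rw [mul_pow, chi_sq, mul_one]
      have h2 : (∑ I ∈ 𝓕₁, (w I * chi (I.erase i) x) ^ 2) = b := by
        rw [hb]
        exact Finset.sum_congr rfl fun I _ => hsq I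
      have hH2 : H x ^ 2 ≤ (𝓕₁.card : ℝ) * b := by
        rw [← h2]
        simpa only [hH] using hcs
      exact le_trans hH2 (mul_le_mul_of_nonneg_right hcard1 hb0)
    set P : ℝ := (ρ : ℝ) ^ (r - 1) with hPdef
    have hP1 : (1 : ℝ) ≤ P := by
      rw [hPdef]
      exact one_le_pow₀ (by exact_mod_cast hρ1)
    have hB : pbExp n (fun x => (H x ^ 2) ^ r) ≤ P * b ^ r := by
      have hpt : ∀ x, (H x ^ 2) ^ r ≤ ((ρ : ℝ) * b) ^ (r - 1) * (H x ^ 2) := by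
        intro x
        have h1 : (H x ^ 2) ^ r = (H x ^ 2) ^ (r - 1) * (H x ^ 2) := by
          rw [← pow_succ]
          congr 1
          omega
        rw [h1]
        refine mul_le_mul_of_nonneg_right ?_ (sq_nonneg _)
        exact pow_le_pow_left₀ (sq_nonneg _) (hHsq x) _
      calc pbExp n (fun x => (H x ^ 2) ^ r)
          ≤ pbExp n (fun x => ((ρ : ℝ) * b) ^ (r - 1) * (H x ^ 2)) := pbExp_mono hpt
        _ = ((ρ : ℝ) * b) ^ (r - 1) * pbExp n (fun x => H x ^ 2) := pbExp_smul _ _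
        _ = P * b ^ r := by
            rw [hHpar, mul_pow, hPdef, mul_assoc, ← pow_succ]
            congr 2
            omega
    -- induction hypothesis for G
    have hA : pbExp n (fun x => (G x ^ 2) ^ r) ≤ C * a ^ r := by
      have hsub0 : ∀ I ∈ 𝓕₀, I ⊆ S := by
        intro I hI j hj
        have h1 := hsub I (Finset.mem_filter.mp hI).1
        have h2 := (Finset.mem_filter.mp hI).2
        rcases Finset.mem_insert.mp (h1 hj) with h | h
        · exact absurd (h ▸ hj) h2
        · exact h
      have hwid0 : ∀ j : Fin n, (𝓕₀.filter (fun I => j ∈ I)).card ≤ ρ := by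
        intro j
        refine le_trans (Finset.card_le_card ?_) (hwidth j)
        intro I hI
        rw [Finset.mem_filter] at *
        exact ⟨(Finset.mem_filter.mp hI.1).1, hI.2⟩
      have hIH := ih 𝓕₀ w hsub0 hwid0
      have hconv : pbExp n (fun x => (G x ^ 2) ^ r)
          = pbExp n (fun x => (∑ I ∈ 𝓕₀, w I * chi I x) ^ (2 * r)) := by
        refine pbExp_congr fun x => ?_
        simp only [hG]
        rw [← pow_mul, mul_comm 2 r, mul_comm r 2]
      rw [hconv, ← ha] at *
      exact hIH
    set A : ℝ := pbExp n (fun x => (G x ^ 2) ^ r) with hAdef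
    set B : ℝ := pbExp n (fun x => (H x ^ 2) ^ r) with hBdef
    have hA0 : 0 ≤ A := pbExp_nonneg fun x => by positivity
    have hB0 : 0 ≤ B := pbExp_nonneg fun x => by positivity
    have hr' : (0 : ℝ) < r := by exact_mod_cast hr
    -- Hölder per term
    have hterm : ∀ m, m ≤ r → pbExp n (fun x => (G x ^ 2) ^ m * (H x ^ 2) ^ (r - m))
        ≤ A ^ ((m : ℝ) / r) * B ^ (((r : ℝ) - m) / r) := by
      intro m hm
      rcases Nat.eq_zero_or_pos m with h0 | hpos
      · subst h0
        have he : pbExp n (fun x => (G x ^ 2) ^ 0 * (H x ^ 2) ^ (r - 0))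
            = B := by
          rw [hBdef]
          exact pbExp_congr fun x => by norm_num
        rw [he]
        rw [Nat.cast_zero, zero_div, Real.rpow_zero, one_mul, sub_zero, div_self hr'.ne',
          Real.rpow_one]
      rcases eq_or_lt_of_le hm with hrm | hlt
      · subst hrm
        have he : pbExp n (fun x => (G x ^ 2) ^ m * (H x ^ 2) ^ (m - m)) = A := by
          rw [hAdef]
          exact pbExp_congr fun x => by rw [Nat.sub_self, pow_zero, mul_one]
        rw [he, sub_self, zero_div, Real.rpow_zero, mul_one, div_self (by exact_mod_cast hr'.ne' : (m:ℝ) ≠ 0), Real.rpow_one]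
      · exact pbExp_pow_holder (fun x => G x ^ 2) (fun x => H x ^ 2)
          (fun x => sq_nonneg _) (fun x => sq_nonneg _) m r hpos hlt
    -- coefficient inequality
    have hcoef : ∀ m, m ≤ r →
        ((2 * r).choose (2 * m) : ℝ) * (A ^ ((m : ℝ) / r) * B ^ (((r : ℝ) - m) / r))
          ≤ C * (r.choose m : ℝ) * (a ^ m * b ^ (r - m)) := by
      intro m hm
      have hmr' : ((r : ℝ) - m) = ((r - m : ℕ) : ℝ) := by
        push_cast [Nat.cast_sub hm]
        ring
      have hem : (0 : ℝ) ≤ (m : ℝ) / r := by positivity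
      have hem' : (0 : ℝ) ≤ ((r : ℝ) - m) / r := by
        have : (m : ℝ) ≤ r := by exact_mod_cast hm
        apply div_nonneg (by linarith) hr'.le
      -- step 1 : A^em * B^em' ≤ (C a^r)^em * (P b^r)^em'
      have hs1 : A ^ ((m : ℝ) / r) * B ^ (((r : ℝ) - m) / r)
          ≤ (C * a ^ r) ^ ((m : ℝ) / r) * (P * b ^ r) ^ (((r : ℝ) - m) / r) := by
        apply mul_le_mul
        · exact Real.rpow_le_rpow hA0 hA hem
        · exact Real.rpow_le_rpow hB0 hB hem'
        · exact Real.rpow_nonneg hB0 _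
        · exact Real.rpow_nonneg (by positivity) _
      -- step 2 : rewrite the right side
      have hCpos : (0 : ℝ) < C := lt_of_lt_of_le one_pos hC1
      have hPpos : (0 : ℝ) < P := lt_of_lt_of_le one_pos hP1
      have hapow : (a ^ r : ℝ) ^ ((m : ℝ) / r) = a ^ m := by
        rw [← Real.rpow_natCast a r, ← Real.rpow_mul ha0, ← Real.rpow_natCast a m]
        congr 1
        field_simp
      have hbpow : (b ^ r : ℝ) ^ (((r : ℝ) - m) / r) = b ^ (r - m) := by
        rw [← Real.rpow_natCast b r, ← Real.rpow_mul hb0, ← Real.rpow_natCast b (r - m)]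
        congr 1
        rw [hmr']
        field_simp
      have hs2 : (C * a ^ r) ^ ((m : ℝ) / r) * (P * b ^ r) ^ (((r : ℝ) - m) / r)
          = (C ^ ((m : ℝ) / r) * P ^ (((r : ℝ) - m) / r)) * (a ^ m * b ^ (r - m)) := by
        rw [Real.mul_rpow hCpos.le (by positivity), Real.mul_rpow hPpos.le (by positivity),
          hapow, hbpow]
        ring
      -- step 3 : coefficient bound
      have hkey : ((2 * r).choose (2 * m) : ℝ) * (C ^ ((m : ℝ) / r) * P ^ (((r : ℝ) - m) / r))
          ≤ C * (r.choose m : ℝ) := by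
        set c1 : ℝ := ((2 * r).factorial : ℝ) with hc1
        have hc1pos : (0 : ℝ) < c1 := by
          rw [hc1]
          exact_mod_cast Nat.factorial_pos _
        have hCsplit : C = c1 * P := by
          rw [hCdef, hPdef, hc1]
          push_cast
          ring
        have hPsum : P ^ ((m : ℝ) / r) * P ^ (((r : ℝ) - m) / r) = P := by
          rw [← Real.rpow_add hPpos]
          have : (m : ℝ) / r + ((r : ℝ) - m) / r = 1 := by field_simp; ring
          rw [this, Real.rpow_one]
        have hc1split : c1 ^ ((m : ℝ) / r) * c1 ^ (((r : ℝ) - m) / r) = c1 := by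
          rw [← Real.rpow_add hc1pos]
          have : (m : ℝ) / r + ((r : ℝ) - m) / r = 1 := by field_simp; ring
          rw [this, Real.rpow_one]
        -- nat inequality
        have hnat : ((2 * r).choose (2 * m)) ^ r ≤ (r.choose m) ^ r * ((2 * r).factorial) ^ (r - m) := by
          have h1 := key_nat r (r - m) (Nat.sub_le r m)
          have h2 : 2 * (r - m) = 2 * r - 2 * m := by omega
          rw [h2] at h1
          have h3 : (2 * r).choose (2 * r - 2 * m) = (2 * r).choose (2 * m) :=
            Nat.choose_symm (by omega)
          have h4 : r.choose (r - m) = r.choose m := Nat.choose_symm hm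
          rw [h3, h4] at h1
          exact h1
        have hreal : ((2 * r).choose (2 * m) : ℝ)
            ≤ (r.choose m : ℝ) * c1 ^ (((r : ℝ) - m) / r) := by
          have := nat_rpow_le ((2 * r).choose (2 * m)) (r.choose m) ((2 * r).factorial)
            r (r - m) hr hnat
          rw [hmr']
          exact_mod_cast this
        have hCm : C ^ ((m : ℝ) / r) = c1 ^ ((m : ℝ) / r) * P ^ ((m : ℝ) / r) := by
          rw [hCsplit, Real.mul_rpow hc1pos.le hPpos.le]
        calc ((2 * r).choose (2 * m) : ℝ) * (C ^ ((m : ℝ) / r) * P ^ (((r : ℝ) - m) / r))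
            = (((2 * r).choose (2 * m) : ℝ)) *
                (c1 ^ ((m : ℝ) / r) * (P ^ ((m : ℝ) / r) * P ^ (((r : ℝ) - m) / r))) := by
              rw [hCm]; ring
          _ = (((2 * r).choose (2 * m) : ℝ)) * c1 ^ ((m : ℝ) / r) * P := by
              rw [hPsum]; ring
          _ ≤ ((r.choose m : ℝ) * c1 ^ (((r : ℝ) - m) / r)) * c1 ^ ((m : ℝ) / r) * P := by
              have hnn : (0:ℝ) ≤ c1 ^ ((m : ℝ) / r) := Real.rpow_nonneg hc1pos.le _
              apply mul_le_mul_of_nonneg_right _ hPpos.le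
              exact mul_le_mul_of_nonneg_right hreal hnn
          _ = (r.choose m : ℝ) * (c1 ^ (((r : ℝ) - m) / r) * c1 ^ ((m : ℝ) / r)) * P := by ring
          _ = (r.choose m : ℝ) * c1 * P := by
              rw [mul_comm (c1 ^ (((r : ℝ) - m) / r)), hc1split]
          _ = C * (r.choose m : ℝ) := by rw [hCsplit]; ring
      calc ((2 * r).choose (2 * m) : ℝ) * (A ^ ((m : ℝ) / r) * B ^ (((r : ℝ) - m) / r))
          ≤ ((2 * r).choose (2 * m) : ℝ) *
              ((C * a ^ r) ^ ((m : ℝ) / r) * (P * b ^ r) ^ (((r : ℝ) - m) / r)) := by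
            apply mul_le_mul_of_nonneg_left hs1 (by positivity)
        _ = ((2 * r).choose (2 * m) : ℝ) * (C ^ ((m : ℝ) / r) * P ^ (((r : ℝ) - m) / r))
              * (a ^ m * b ^ (r - m)) := by rw [hs2]; ring
        _ ≤ C * (r.choose m : ℝ) * (a ^ m * b ^ (r - m)) := by
            apply mul_le_mul_of_nonneg_right hkey (by positivity)
    -- put everything together
    have hgoalL : pbExp n (fun x => (∑ I ∈ 𝓕, w I * chi I x) ^ (2 * r))
        = pbExp n (fun x => F x ^ (2 * r)) := pbExp_congr fun x => by simp only [hF]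
    have hW : (∑ I ∈ 𝓕, w I ^ 2) = a + b := by
      rw [ha, hb, h𝓕₀, h𝓕₁]
      rw [← Finset.sum_filter_add_sum_filter_not 𝓕 (fun I => i ∈ I) (fun I => w I ^ 2)]
      ring
    rw [hgoalL, hexp, hW]
    calc ∑ m ∈ Finset.range (r + 1), ((2 * r).choose (2 * m) : ℝ) *
            pbExp n (fun x => (G x ^ 2) ^ m * (H x ^ 2) ^ (r - m))
        ≤ ∑ m ∈ Finset.range (r + 1), C * (r.choose m : ℝ) * (a ^ m * b ^ (r - m)) := by
          refine Finset.sum_le_sum fun m hm => ?_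
          have hmr : m ≤ r := by have := Finset.mem_range.mp hm; omega
          calc ((2 * r).choose (2 * m) : ℝ) *
                pbExp n (fun x => (G x ^ 2) ^ m * (H x ^ 2) ^ (r - m))
              ≤ ((2 * r).choose (2 * m) : ℝ) *
                (A ^ ((m : ℝ) / r) * B ^ (((r : ℝ) - m) / r)) := by
                apply mul_le_mul_of_nonneg_left (hterm m hmr) (by positivity)
            _ ≤ C * (r.choose m : ℝ) * (a ^ m * b ^ (r - m)) := hcoef m hmr
      _ = C * (a + b) ^ r := by
          rw [add_pow]
          rw [Finset.mul_sum]
          refine Finset.sum_congr rfl fun m hm => ?_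
          ring

/-- **Hypercontractive Inequality for bounded Fourier width (general `q > p ≥ 2`).**
If `f : {-1,1}^n → ℝ` has Fourier width `ρ ≥ 1` and `q > p ≥ 2` are reals, then
`‖f‖_q ≤ ((2r)! ρ^{r-1})^{1/(2r)} ‖f‖_p`, where `r = ⌈q/2⌉`. -/
theorem hypercontractive_qp_width (n ρ : ℕ) (hρ1 : 1 ≤ ρ)
    (𝓕 : Finset (Finset (Fin n)))
    (w : Finset (Fin n) → ℝ) (hw : ∀ I ∈ 𝓕, w I ≠ 0)
    (f : (Fin n → Bool) → ℝ) (hf : ∀ x, f x = ∑ I ∈ 𝓕, w I * chi I x)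
    (hρ : ∀ i : Fin n, (𝓕.filter (fun I => i ∈ I)).card ≤ ρ)
    (p q : ℝ) (hp : 2 ≤ p) (hpq : p < q) :
    pbNorm n q f ≤
      (((2 * ⌈q / 2⌉₊).factorial * ρ ^ (⌈q / 2⌉₊ - 1) : ℕ) : ℝ) ^ (1 / (2 * ⌈q / 2⌉₊ : ℝ)) *
        pbNorm n p f := by
  classical
  set r : ℕ := ⌈q / 2⌉₊ with hrdef
  have hq : 2 < q := lt_of_le_of_lt hp hpq
  have hq0 : 0 < q := by linarith
  have hr1 : 1 ≤ r := by
    rw [hrdef]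
    exact Nat.one_le_iff_ne_zero.mpr (Nat.pos_iff_ne_zero.mp (Nat.ceil_pos.mpr (by linarith)))
  have hrR : (1 : ℝ) ≤ (r : ℝ) := by exact_mod_cast hr1
  have hq2r : q ≤ 2 * (r : ℝ) := by
    have h := Nat.le_ceil (q / 2)
    rw [← hrdef] at h
    linarith
  set W : ℝ := ∑ I ∈ 𝓕, w I ^ 2 with hWdef
  have hW0 : 0 ≤ W := Finset.sum_nonneg fun I _ => sq_nonneg _
  set C : ℝ := (((2 * r).factorial * ρ ^ (r - 1) : ℕ) : ℝ) with hCdef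
  have hC0 : (0 : ℝ) ≤ C := Nat.cast_nonneg _
  have hmom := moment_bound r ρ hr1 hρ1 (Finset.univ : Finset (Fin n)) 𝓕 w
    (fun I _ => Finset.subset_univ I) hρ
  have hfmom : pbExp n (fun x => f x ^ (2 * r)) ≤ C * W ^ r := by
    rw [pbExp_congr (fun x => by rw [hf x] :
      ∀ x, f x ^ (2 * r) = (∑ I ∈ 𝓕, w I * chi I x) ^ (2 * r))]
    exact hmom
  have hpar : pbExp n (fun x => f x ^ 2) = W := by
    have hinj : ∀ s ∈ 𝓕, ∀ t ∈ 𝓕, (fun I => I) s = (fun I => I) t → s = t :=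
      fun s _ t _ h => h
    have hp2 := parseval 𝓕 w (fun I => I) hinj
    calc pbExp n (fun x => f x ^ 2)
        = pbExp n (fun x => (∑ I ∈ 𝓕, w I * chi I x) ^ 2) :=
          pbExp_congr fun x => by rw [hf x]
      _ = W := hp2
  have hnorm2 : pbNorm n 2 f = W ^ ((1 : ℝ) / 2) := by
    unfold pbNorm
    have h2 : ∀ x : Fin n → Bool, |f x| ^ (2 : ℝ) = f x ^ 2 := fun x => by
      rw [show (2 : ℝ) = ((2 : ℕ) : ℝ) by norm_num, Real.rpow_natCast, sq_abs]
    rw [pbExp_congr h2, hpar]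
  have hnorm2r : pbNorm n (2 * (r : ℝ)) f ≤ C ^ (1 / (2 * (r : ℝ))) * W ^ ((1 : ℝ) / 2) := by
    unfold pbNorm
    have hee : ∀ x : Fin n → Bool, |f x| ^ (2 * (r : ℝ)) = f x ^ (2 * r) := fun x => by
      rw [show 2 * (r : ℝ) = ((2 * r : ℕ) : ℝ) by push_cast; ring, Real.rpow_natCast]
      rw [pow_mul, sq_abs, ← pow_mul]
    rw [pbExp_congr hee]
    have hnn : 0 ≤ pbExp n (fun x => f x ^ (2 * r)) :=
      pbExp_nonneg fun x => by rw [pow_mul]; positivity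
    calc (pbExp n (fun x => f x ^ (2 * r))) ^ (1 / (2 * (r : ℝ)))
        ≤ (C * W ^ r) ^ (1 / (2 * (r : ℝ))) :=
          Real.rpow_le_rpow hnn hfmom (by positivity)
      _ = C ^ (1 / (2 * (r : ℝ))) * W ^ ((1 : ℝ) / 2) := by
          rw [Real.mul_rpow hC0 (by positivity), ← Real.rpow_natCast W r,
            ← Real.rpow_mul hW0]
          congr 2
          have hrne : (r : ℝ) ≠ 0 := by linarith
          field_simp
  have c1 : pbNorm n q f ≤ pbNorm n (2 * (r : ℝ)) f := pbNorm_mono f q _ hq0 hq2r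
  have c2 : pbNorm n 2 f ≤ pbNorm n p f := pbNorm_mono f 2 p (by norm_num) hp
  have hnonneg : 0 ≤ C ^ (1 / (2 * (r : ℝ))) := Real.rpow_nonneg hC0 _
  calc pbNorm n q f ≤ pbNorm n (2 * (r : ℝ)) f := c1
    _ ≤ C ^ (1 / (2 * (r : ℝ))) * W ^ ((1 : ℝ) / 2) := hnorm2r
    _ = C ^ (1 / (2 * (r : ℝ))) * pbNorm n 2 f := by rw [hnorm2]
    _ ≤ C ^ (1 / (2 * (r : ℝ))) * pbNorm n p f := mul_le_mul_of_nonneg_left c2 hnonneg
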